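/- Let C be a TDD respecting a vtree T over a finite variable set X. For every node t of T and all distinct t-nodes g, g' of C, the functions f_g and f_{g'} have disjoint sets of models. As a consequence, for every model τ of f_C there exists a unique certificate for τ in C. -/
import Mathlib


/-- A vtree: a rooted binary tree whose leaves are labeled by variables. -/
inductive Vtree (V : Type) where
  | leaf : V → Vtree V
  | node : Vtree V → Vtree V → Vtree V

namespace Vtree

variable {V : Type} [DecidableEq V]

/-- The set of variables labeling the leaves of a vtree. -/
def vars : Vtree V → Finset V
  | leaf x => {x}
  | node l r => l.vars ∪ r.vars

/-- A vtree is proper when its leaves carry pairwise distinct variables,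
so that the leaves are in one-to-one correspondence with `vars`. -/
def Proper : Vtree V → Prop
  | leaf _ => True
  | node l r => l.Proper ∧ r.Proper ∧ Disjoint l.vars r.vars

/-- `T.IsNode t` : `t` is (the subtree rooted at) a node of `T`. -/
def IsNode : Vtree V → Vtree V → Prop
  | leaf x, t => t = leaf x
  | node l r, t => t = node l r ∨ l.IsNode t ∨ r.IsNode t

/-- Remove every leaf whose variable is in `Y`, suppressing unary nodes.
Returns `none` if no leaf survives. -/
def restrict (Y : Finset V) : Vtree V → Option (Vtree V)
  | leaf x => if x ∈ Y then none else some (leaf x)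
  | node l r =>
    match l.restrict Y, r.restrict Y with
    | none, o => o
    | some l', none => some l'
    | some l', some r' => some (node l' r')

/-- The vtree `T ∖ x`. -/
def remove (x : V) (T : Vtree V) : Option (Vtree V) := T.restrict {x}

/-- A vtree is linear when every internal node has a leaf child. -/
def Linear : Vtree V → Prop
  | leaf _ => True
  | node l r => ((∃ x, l = leaf x) ∨ (∃ x, r = leaf x)) ∧ l.Linear ∧ r.Linear

/-- The variable order induced by a linear vtree. -/
def order : Vtree V → List V
  | leaf x => [x]
  | node (leaf x) r => x :: r.order
  | node l (leaf x) => x :: l.order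
  | node l r => l.order ++ r.order

end Vtree

/-- Labels of leaf-layer nodes of a TDD: the positive literal, the negative
literal, and the constants 1 and 0. -/
inductive TLab where
  | pos | neg | one | zero
deriving DecidableEq

/-- Disjunction of two leaf labels (used when contracting twin leaf nodes). -/
def TLab.lor : TLab → TLab → TLab
  | .zero, a => a
  | a, .zero => a
  | .one, _ => .one
  | _, .one => .one
  | .pos, .pos => .pos
  | .neg, .neg => .neg
  | .pos, .neg => .one
  | .neg, .pos => .one

/-- A (non-deterministic) tree decision diagram structured along a vtree:
one layer of nodes (identified by natural numbers) per vtree node; leaf-layer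
nodes carry labels, internal-layer nodes carry their sets of input pairs. -/
inductive NTDD (V : Type) where
  | leaf (x : V) (ns : Finset ℕ) (lab : ℕ → TLab)
  | node (l r : NTDD V) (ns : Finset ℕ) (E : ℕ → Finset (ℕ × ℕ))

namespace NTDD

variable {V : Type}

/-- The vtree that an nTDD is structured along. -/
def shape : NTDD V → Vtree V
  | leaf x _ _ => .leaf x
  | node l r _ _ => .node l.shape r.shape

/-- The set of nodes of the top (root) layer. -/
def nodes : NTDD V → Finset ℕ
  | leaf _ ns _ => ns
  | node _ _ ns _ => ns

/-- The size of an nTDD: the total number of input pairs. -/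
def size : NTDD V → ℕ
  | leaf _ _ _ => 0
  | node l r ns E => l.size + r.size + ∑ g ∈ ns, (E g).card

/-- The width of an nTDD: the maximal cardinality of a layer. -/
def width : NTDD V → ℕ
  | leaf _ ns _ => ns.card
  | node l r ns _ => max ns.card (max l.width r.width)

/-- `C.sat g τ` : (the restriction of) the assignment `τ` is a model of the
function `f_g` computed by the top-layer node `g` of `C`. -/
def sat : NTDD V → ℕ → (V → Bool) → Prop
  | leaf x _ lab, g, τ =>
    match lab g with
    | .pos => τ x = true
    | .neg => τ x = false
    | .one => True
    | .zero => False
  | node l r _ E, g, τ => ∃ p ∈ E g, l.sat p.1 τ ∧ r.sat p.2 τ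

/-- Well-formedness: input pairs of top-layer nodes reference nodes of the
children layers. -/
def WF : NTDD V → Prop
  | leaf _ _ _ => True
  | node l r ns E => l.WF ∧ r.WF ∧ ∀ g ∈ ns, ∀ p ∈ E g, p.1 ∈ l.nodes ∧ p.2 ∈ r.nodes

/-- Determinism, turning an nTDD into a TDD: at each leaf layer at most one
node labeled by each of `x`, `¬x`, `1`, and if a node is labeled `1` then all
other nodes are labeled `0`; at each internal layer every pair is the input of
at most one node. -/
def Det : NTDD V → Prop
  | leaf _ ns lab =>
      (∀ g ∈ ns, ∀ g' ∈ ns, lab g = TLab.pos → lab g' = TLab.pos → g = g') ∧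
      (∀ g ∈ ns, ∀ g' ∈ ns, lab g = TLab.neg → lab g' = TLab.neg → g = g') ∧
      (∀ g ∈ ns, ∀ g' ∈ ns, lab g = TLab.one → lab g' = TLab.one → g = g') ∧
      (∀ g ∈ ns, lab g = TLab.one → ∀ g' ∈ ns, g' ≠ g → lab g' = TLab.zero)
  | node l r ns E => l.Det ∧ r.Det ∧ ∀ g ∈ ns, ∀ g' ∈ ns, g ≠ g' → Disjoint (E g) (E g')

/-- `C.Subdiagram D` : `D` is the sub-diagram of `C` sitting at some node of
the underlying vtree (including `C` itself). -/
def Subdiagram : NTDD V → NTDD V → Prop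
  | leaf x ns lab, D => D = leaf x ns lab
  | node l r ns E, D => D = node l r ns E ∨ l.Subdiagram D ∨ r.Subdiagram D

/-- A TDD is full if, at every layer, every assignment is a model of some node
of that layer. -/
def Full (C : NTDD V) : Prop :=
  ∀ D : NTDD V, C.Subdiagram D → ∀ τ : V → Bool, ∃ g ∈ D.nodes, D.sat g τ

end NTDD

/-- A choice of one node id per vtree node, mirroring the vtree: the data of a
certificate. -/
inductive IdTree where
  | leaf (g : ℕ)
  | node (g : ℕ) (l r : IdTree)

/-- The id chosen at the root. -/
def IdTree.root : IdTree → ℕ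
  | .leaf g => g
  | .node g _ _ => g

namespace NTDD

variable {V : Type}

/-- `C.IsCert P τ` : the choice `P` of one node per layer is a certificate for
`τ` in `C` (except for the root condition `P.root = out`, stated separately):
at a leaf labeled `x` the chosen node is labeled `1` or by a literal satisfied
by `τ`, and at an internal node the chosen pair of children nodes is an input
of the chosen node. -/
def IsCert : NTDD V → IdTree → (V → Bool) → Prop
  | leaf x ns lab, IdTree.leaf g, τ =>
      g ∈ ns ∧ (lab g = TLab.one ∨ (lab g = TLab.pos ∧ τ x = true) ∨
        (lab g = TLab.neg ∧ τ x = false))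
  | node l r ns E, IdTree.node g pl pr, τ =>
      g ∈ ns ∧ (pl.root, pr.root) ∈ E g ∧ l.IsCert pl τ ∧ r.IsCert pr τ
  | _, _, _ => False

/-- `SubPair C P D Q` : `D` is the sub-diagram of `C` at some vtree node `t`,
and `Q` is the corresponding part of the certificate data `P` (so `Q.root` is
the node that `P` chooses at `t`). -/
def SubPair : NTDD V → IdTree → NTDD V → IdTree → Prop
  | leaf x ns lab, P, D, Q => D = leaf x ns lab ∧ Q = P
  | node l r ns E, P, D, Q =>
      (D = node l r ns E ∧ Q = P) ∨
      (match P with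
       | IdTree.node _ pl pr => l.SubPair pl D Q ∨ r.SubPair pr D Q
       | _ => False)

/-- Contract the two top-layer nodes `g1, g1'` into the fresh node `v`. -/
def contractLayer (g1 g1' v : ℕ) : NTDD V → NTDD V
  | leaf x ns lab =>
      leaf x (insert v ((ns.erase g1).erase g1'))
        (fun g => if g = v then (lab g1).lor (lab g1') else lab g)
  | node l r ns E =>
      node l r (insert v ((ns.erase g1).erase g1'))
        (fun g => if g = v then E g1 ∪ E g1' else E g)

/-- Twin contraction of nodes `g1, g1'` of the left child layer into `v`:
they are merged in the left layer, and every input pair `(g1, g2)` or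
`(g1', g2)` of a top-layer node is replaced by `(v, g2)`. -/
def contractAtL (g1 g1' v : ℕ) : NTDD V → NTDD V
  | node l r ns E =>
      node (l.contractLayer g1 g1' v) r ns
        (fun g => (E g).image (fun p => if p.1 = g1 ∨ p.1 = g1' then (v, p.2) else p))
  | C => C

/-- Twin contraction of nodes `g1, g1'` of the right child layer into `v`. -/
def contractAtR (g1 g1' v : ℕ) : NTDD V → NTDD V
  | node l r ns E =>
      node l (r.contractLayer g1 g1' v) ns
        (fun g => (E g).image (fun p => if p.2 = g1 ∨ p.2 = g1' then (p.1, v) else p))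
  | C => C

open Classical in
/-- Replace the sub-diagram `D` of `C` by `D'` (in a proper vtree, sub-diagrams
at distinct positions are distinct, so this is unambiguous). -/
noncomputable def replace : NTDD V → NTDD V → NTDD V → NTDD V
  | leaf x ns lab, D, D' => if leaf x ns lab = D then D' else leaf x ns lab
  | node l r ns E, D, D' =>
      if node l r ns E = D then D'
      else node (l.replace D D') (r.replace D D') ns E

/-- `g1` and `g1'` are twins of the left child layer: they have the same
siblings with respect to every top-layer node. -/
def TwinsL (g1 g1' : ℕ) : NTDD V → Prop
  | node l _ ns E => g1 ∈ l.nodes ∧ g1' ∈ l.nodes ∧ g1 ≠ g1' ∧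
      ∀ g ∈ ns, ∀ g2 : ℕ, ((g1, g2) ∈ E g ↔ (g1', g2) ∈ E g)
  | _ => False

/-- `g1` and `g1'` are twins of the right child layer. -/
def TwinsR (g1 g1' : ℕ) : NTDD V → Prop
  | node _ r ns E => g1 ∈ r.nodes ∧ g1' ∈ r.nodes ∧ g1 ≠ g1' ∧
      ∀ g ∈ ns, ∀ g2 : ℕ, ((g2, g1) ∈ E g ↔ (g2, g1') ∈ E g)
  | _ => False

/-- The node set of the left child layer. -/
def leftNodes : NTDD V → Finset ℕ
  | node l _ _ _ => l.nodes
  | _ => ∅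

/-- The node set of the right child layer. -/
def rightNodes : NTDD V → Finset ℕ
  | node _ r _ _ => r.nodes
  | _ => ∅

end NTDD

/-- The number of distinct non-trivial `Y`-subfunctions of the Boolean
function `f` : functions of the form `σ ↦ f (Y.piecewise τ σ)` for some
`τ`, having at least one model. -/
noncomputable def subCount {V : Type} [DecidableEq V] (f : (V → Bool) → Prop) (Y : Finset V) : ℕ :=
  Nat.card {h : (V → Bool) → Prop |
    (∃ τ : V → Bool, h = fun σ => f (Y.piecewise τ σ)) ∧ ∃ σ : V → Bool, h σ}

/-- The number of distinct `Y`-subfunctions of `f` (trivial ones included). -/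
noncomputable def subCountAll {V : Type} [DecidableEq V] (f : (V → Bool) → Prop) (Y : Finset V) : ℕ :=
  Nat.card {h : (V → Bool) → Prop |
    ∃ τ : V → Bool, h = fun σ => f (Y.piecewise τ σ)}

namespace NTDD

variable {V : Type}

theorem sub_wf {C D : NTDD V} (h : C.WF) (hs : C.Subdiagram D) : D.WF := by
  induction C with
  | leaf x ns lab => simp only [Subdiagram] at hs; subst hs; exact h
  | node l r ns E ihl ihr =>
    rcases hs with h1 | h2 | h3
    · subst h1; exact h
    · exact ihl h.1 h2
    · exact ihr h.2.1 h3

theorem sub_det {C D : NTDD V} (h : C.Det) (hs : C.Subdiagram D) : D.Det := by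
  induction C with
  | leaf x ns lab => simp only [Subdiagram] at hs; subst hs; exact h
  | node l r ns E ihl ihr =>
    rcases hs with h1 | h2 | h3
    · subst h1; exact h
    · exact ihl h.1 h2
    · exact ihr h.2.1 h3

theorem sat_disjoint {C : NTDD V} (hWF : C.WF) (hDet : C.Det) :
    ∀ g ∈ C.nodes, ∀ g' ∈ C.nodes, g ≠ g' → ∀ τ : V → Bool,
      C.sat g τ → C.sat g' τ → False := by
  induction C with
  | leaf x ns lab =>
    intro g hg g' hg' hne τ hs hs'
    obtain ⟨h1, h2, h3, h4⟩ := hDet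
    simp only [sat] at hs hs'
    rcases e : lab g with _|_|_|_ <;> rcases e' : lab g' with _|_|_|_ <;>
      rw [e] at hs <;> rw [e'] at hs'
    all_goals first
      | exact hs
      | exact hs'
      | exact hne (h1 g hg g' hg' e e')
      | exact hne (h2 g hg g' hg' e e')
      | exact hne (h3 g hg g' hg' e e')
      | (have hb : τ x = true := hs; have hb' : τ x = false := hs';
         rw [hb] at hb'; cases hb')
      | (have hb : τ x = true := hs'; have hb' : τ x = false := hs;
         rw [hb] at hb'; cases hb')
      | (have := h4 g hg e g' hg' (Ne.symm hne); rw [this] at e'; cases e')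
      | (have := h4 g' hg' e' g hg hne; rw [this] at e; cases e)
  | node l r ns E ihl ihr =>
    intro g hg g' hg' hne τ hs hs'
    obtain ⟨hdl, hdr, hdis⟩ := hDet
    obtain ⟨hwl, hwr, hwe⟩ := hWF
    obtain ⟨p, hp, hpl, hpr⟩ := hs
    obtain ⟨q, hq, hql, hqr⟩ := hs'
    have m1 := hwe g hg p hp
    have m2 := hwe g' hg' q hq
    have e1 : p.1 = q.1 := by
      by_contra hne1
      exact ihl hwl hdl p.1 m1.1 q.1 m2.1 hne1 τ hpl hql
    have e2 : p.2 = q.2 := by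
      by_contra hne2
      exact ihr hwr hdr p.2 m1.2 q.2 m2.2 hne2 τ hpr hqr
    have hpq : p = q := Prod.ext e1 e2
    subst hpq
    exact Finset.disjoint_left.mp (hdis g hg g' hg' hne) hp hq

theorem cert_sat {C : NTDD V} {P : IdTree} {τ : V → Bool} (h : C.IsCert P τ) :
    C.sat P.root τ := by
  induction C generalizing P with
  | leaf x ns lab =>
    cases P with
    | node g pl pr => exact h.elim
    | leaf g =>
      obtain ⟨hg, h1 | ⟨h1, h2⟩ | ⟨h1, h2⟩⟩ := h <;>
        simp only [sat, IdTree.root, h1] <;> exact h2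
  | node l r ns E ihl ihr =>
    cases P with
    | leaf g => exact h.elim
    | node g pl pr =>
      obtain ⟨hg, hp, hl, hr⟩ := h
      exact ⟨(pl.root, pr.root), hp, ihl hl, ihr hr⟩

theorem cert_exists {C : NTDD V} (hWF : C.WF) {g : ℕ} {τ : V → Bool}
    (hg : g ∈ C.nodes) (hs : C.sat g τ) :
    ∃ P : IdTree, P.root = g ∧ C.IsCert P τ := by
  induction C generalizing g with
  | leaf x ns lab =>
    refine ⟨IdTree.leaf g, rfl, hg, ?_⟩
    simp only [sat] at hs
    rcases e : lab g with _|_|_|_ <;> rw [e] at hs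
    · exact Or.inr (Or.inl ⟨rfl, hs⟩)
    · exact Or.inr (Or.inr ⟨rfl, hs⟩)
    · exact Or.inl rfl
    · exact hs.elim
  | node l r ns E ihl ihr =>
    obtain ⟨hwl, hwr, hwe⟩ := hWF
    obtain ⟨p, hp, hpl, hpr⟩ := hs
    have hm := hwe g hg p hp
    obtain ⟨Pl, hPl, hcl⟩ := ihl hwl hm.1 hpl
    obtain ⟨Pr, hPr, hcr⟩ := ihr hwr hm.2 hpr
    refine ⟨IdTree.node g Pl Pr, rfl, hg, ?_, hcl, hcr⟩
    rw [hPl, hPr]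
    exact hp

theorem cert_unique {C : NTDD V} (hWF : C.WF) (hDet : C.Det) {P P' : IdTree}
    {τ : V → Bool} (h : C.IsCert P τ) (h' : C.IsCert P' τ)
    (hr : P.root = P'.root) : P = P' := by
  induction C generalizing P P' with
  | leaf x ns lab =>
    cases P with
    | node g pl pr => exact h.elim
    | leaf g =>
      cases P' with
      | node g pl pr => exact h'.elim
      | leaf g' => simp only [IdTree.root] at hr; rw [hr]
  | node l r ns E ihl ihr =>
    cases P with
    | leaf g => exact h.elim
    | node g pl pr =>
      cases P' with
      | leaf g' => exact h'.elim
      | node g' pl' pr' =>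
        simp only [IdTree.root] at hr
        subst hr
        obtain ⟨hwl, hwr, hwe⟩ := hWF
        obtain ⟨hdl, hdr, _⟩ := hDet
        obtain ⟨hg, hp, hl, hr1⟩ := h
        obtain ⟨hg', hp', hl', hr1'⟩ := h'
        have m := hwe g hg _ hp
        have m' := hwe g hg' _ hp'
        have e1 : pl.root = pl'.root := by
          by_contra hne
          exact sat_disjoint hwl hdl _ m.1 _ m'.1 hne τ (cert_sat hl) (cert_sat hl')
        have e2 : pr.root = pr'.root := by
          by_contra hne
          exact sat_disjoint hwr hdr _ m.2 _ m'.2 hne τ (cert_sat hr1) (cert_sat hr1')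
        rw [ihl hwl hdl hl hl' e1, ihr hwr hdr hr1 hr1' e2]

end NTDD

/-- Let `C` be a TDD respecting a vtree `T` over a finite
variable set `X`. For every node `t` of `T` (given as a sub-diagram `D` of
`C`) and all distinct `t`-nodes `g, g'`, the functions `f_g` and `f_{g'}`
have disjoint sets of models; consequently every model `τ` of `f_C` has a
unique certificate in `C`. -/
theorem stmt1 {V : Type} [DecidableEq V] (X : Finset V) (T : Vtree V)
    (hTp : T.Proper) (hTX : T.vars = X)
    (C : NTDD V) (out : ℕ) (hsh : C.shape = T) (hWF : C.WF) (hDet : C.Det)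
    (hout : out ∈ C.nodes) :
    (∀ D : NTDD V, C.Subdiagram D → ∀ g ∈ D.nodes, ∀ g' ∈ D.nodes, g ≠ g' →
      ∀ τ : V → Bool, ¬ (D.sat g τ ∧ D.sat g' τ)) ∧
    (∀ τ : V → Bool, C.sat out τ →
      ∃! P : IdTree, P.root = out ∧ C.IsCert P τ) := by
  constructor
  · rintro D hsub g hg g' hg' hne τ ⟨hs, hs'⟩
    exact NTDD.sat_disjoint (NTDD.sub_wf hWF hsub) (NTDD.sub_det hDet hsub)
      g hg g' hg' hne τ hs hs'
  · intro τ hs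
    obtain ⟨P, hP, hc⟩ := NTDD.cert_exists hWF hout hs
    refine ⟨P, ⟨hP, hc⟩, ?_⟩
    rintro Q ⟨hQ, hcq⟩
    exact NTDD.cert_unique hWF hDet hcq hc (hQ.trans hP.symm)
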